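/- arXiv:2001.02551 — 3 statements merged into one kernel-verified Lean document; each statement's English description precedes it below -/
import Mathlib

section
/- Let A, B be finite subsets of an additive abelian group Z, let G ⊆ A × B, and K > 1 with #G > #A·#B/K and #{a + b : (a, b) ∈ G} ≤ K·(#A)^{1/2}·(#B)^{1/2}. Then there exist subsets A' ⊆ A and B' ⊆ B with #A' ≳ #A/K, #B' ≳ #B/K, and #(A' + B') ≲ K^{O(1)}·(#A)^{1/2}·(#B)^{1/2}. -/
open Pointwise

namespace BSG7

private lemma count_swap {α β : Type*} (s : Finset α) (t : Finset β) (p : α → β → Prop)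
    [∀ a b, Decidable (p a b)] :
    ∑ a ∈ s, (t.filter (fun b => p a b)).card = ∑ b ∈ t, (s.filter (fun a => p a b)).card := by
  simp_rw [Finset.card_filter]
  exact Finset.sum_comm

private lemma sum_fiber_le {α β : Type*} [DecidableEq β] (T : Finset α) (V : Finset β)
    (g : α → β) [∀ a b : β, Decidable (a = b)] :
    ∑ s ∈ V, (T.filter (fun u => g u = s)).card ≤ T.card := by
  classical
  have h1 : (T.filter (fun u => g u ∈ V)).card
      = ∑ s ∈ V, ((T.filter (fun u => g u ∈ V)).filter (fun u => g u = s)).card :=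
    Finset.card_eq_sum_card_fiberwise (fun u hu => (Finset.mem_filter.mp hu).2)
  have h2 : ∀ s ∈ V, (T.filter (fun u => g u ∈ V)).filter (fun u => g u = s)
      = T.filter (fun u => g u = s) := by
    intro s hs
    rw [Finset.filter_filter]
    apply Finset.filter_congr
    intro u _
    constructor
    · tauto
    · intro h; exact ⟨h ▸ hs, h⟩
  calc ∑ s ∈ V, (T.filter (fun u => g u = s)).card
      = ∑ s ∈ V, ((T.filter (fun u => g u ∈ V)).filter (fun u => g u = s)).card := by
        exact Finset.sum_congr rfl (fun s hs => by rw [h2 s hs])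
    _ = (T.filter (fun u => g u ∈ V)).card := h1.symm
    _ ≤ T.card := Finset.card_filter_le _ _

variable {Z : Type} [AddCommGroup Z] [DecidableEq Z]

/-- degree of `a` into `B` -/
private def deg (B : Finset Z) (G : Finset (Z × Z)) (a : Z) : ℕ :=
  (B.filter (fun b => (a, b) ∈ G)).card

/-- codegree of `a, a'` -/
private def cd (B : Finset Z) (G : Finset (Z × Z)) (a a' : Z) : ℕ :=
  (B.filter (fun b => (a, b) ∈ G ∧ (a', b) ∈ G)).card

open Classical in
/-- vertices of `A` of large degree -/
private noncomputable def A0 (A B : Finset Z) (G : Finset (Z × Z)) (K : ℝ) : Finset Z :=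
  A.filter (fun a => (B.card : ℝ) ≤ 2*K*(deg B G a))

open Classical in
/-- bad pairs: small codegree -/
private noncomputable def Bad (A B : Finset Z) (G : Finset (Z × Z)) (K : ℝ) : Finset (Z × Z) :=
  ((A0 A B G K) ×ˢ (A0 A B G K)).filter (fun q => ((cd B G q.1 q.2 : ℝ)) * (256*K^3) < B.card)

/-- neighbourhood of `b` inside `A0` -/
private noncomputable def nbr (A B : Finset Z) (G : Finset (Z × Z)) (K : ℝ) (b : Z) : Finset Z :=
  (A0 A B G K).filter (fun a => (a, b) ∈ G)

/-- bad pairs inside the neighbourhood of `b` -/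
private noncomputable def bIn (A B : Finset Z) (G : Finset (Z × Z)) (K : ℝ) (b : Z) :
    Finset (Z × Z) :=
  (Bad A B G K).filter (fun q => (q.1, b) ∈ G ∧ (q.2, b) ∈ G)

/-- number of bad partners of `a` in the neighbourhood of `bs` -/
private noncomputable def bcnt (A B : Finset Z) (G : Finset (Z × Z)) (K : ℝ) (bs : Z) (a : Z) : ℕ :=
  ((nbr A B G K bs).filter (fun a' => (a, a') ∈ Bad A B G K)).card

open Classical in
/-- the subset `A'` -/
private noncomputable def Ap (A B : Finset Z) (G : Finset (Z × Z)) (K : ℝ) (bs : Z) : Finset Z :=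
  (nbr A B G K bs).filter (fun a => (bcnt A B G K bs a : ℝ) * (16*K) ≤ ((nbr A B G K bs).card : ℝ))

open Classical in
/-- the subset `B'` -/
private noncomputable def Bp (A B : Finset Z) (G : Finset (Z × Z)) (K : ℝ) (bs : Z) : Finset Z :=
  B.filter (fun b => ((Ap A B G K bs).card : ℝ)
    ≤ 4*K*(((Ap A B G K bs).filter (fun a => (a, b) ∈ G)).card : ℝ))

section Lemmas

variable (A B : Finset Z) (G : Finset (Z × Z)) (K : ℝ)

private lemma A0_subset : A0 A B G K ⊆ A := Finset.filter_subset _ _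

private lemma mem_A0_deg {a : Z} (ha : a ∈ A0 A B G K) : (B.card : ℝ) ≤ 2*K*(deg B G a) := by
  rw [A0, Finset.mem_filter] at ha
  exact ha.2

private lemma Gcard (hGAB : G ⊆ A ×ˢ B) : G.card = ∑ a ∈ A, deg B G a := by
  classical
  have h1 : G = (A ×ˢ B).filter (fun p => p ∈ G) := by
    rw [Finset.filter_mem_eq_inter, Finset.inter_eq_right.mpr hGAB]
  conv_lhs => rw [h1]
  rw [Finset.card_filter, Finset.sum_product]
  refine Finset.sum_congr rfl (fun a _ => ?_)
  rw [deg, Finset.card_filter]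

private lemma E0_lb (hGAB : G ⊆ A ×ˢ B) (hK : 1 < K)
    (hG : (A.card : ℝ) * B.card / K < G.card) :
    (A.card : ℝ) * B.card < 2*K*(∑ a ∈ A0 A B G K, (deg B G a : ℝ)) := by
  classical
  have hK0 : (0:ℝ) < K := lt_trans one_pos hK
  have hsplit : ∑ a ∈ A, (deg B G a : ℝ)
      = (∑ a ∈ A0 A B G K, (deg B G a : ℝ))
        + ∑ a ∈ A.filter (fun a => ¬ ((B.card : ℝ) ≤ 2*K*(deg B G a))), (deg B G a : ℝ) := by
    rw [A0]
    exact (Finset.sum_filter_add_sum_filter_not A _ _).symm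
  have hrest : ∑ a ∈ A.filter (fun a => ¬ ((B.card : ℝ) ≤ 2*K*(deg B G a))), (deg B G a : ℝ)
      ≤ (A.card : ℝ) * ((B.card : ℝ)/(2*K)) := by
    calc ∑ a ∈ A.filter (fun a => ¬ ((B.card : ℝ) ≤ 2*K*(deg B G a))), (deg B G a : ℝ)
        ≤ (A.filter (fun a => ¬ ((B.card : ℝ) ≤ 2*K*(deg B G a)))).card • ((B.card : ℝ)/(2*K)) := by
          apply Finset.sum_le_card_nsmul
          intro a ha
          have := (Finset.mem_filter.mp ha).2
          push_neg at this
          rw [le_div_iff₀ (by positivity)]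
          nlinarith
      _ ≤ (A.card : ℝ) * ((B.card : ℝ)/(2*K)) := by
          rw [nsmul_eq_mul]
          have h1 : ((A.filter (fun a => ¬ ((B.card : ℝ) ≤ 2*K*(deg B G a)))).card : ℝ)
              ≤ (A.card : ℝ) := Nat.cast_le.mpr (Finset.card_filter_le _ _)
          have h2 : (0:ℝ) ≤ (B.card : ℝ)/(2*K) := by positivity
          nlinarith
  have hGR : (A.card : ℝ) * B.card / K < (∑ a ∈ A0 A B G K, (deg B G a : ℝ))
      + (A.card : ℝ) * ((B.card : ℝ)/(2*K)) := by
    calc (A.card : ℝ) * B.card / K < (G.card : ℝ) := hG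
      _ = ∑ a ∈ A, (deg B G a : ℝ) := by rw [Gcard A B G hGAB]; push_cast; ring
      _ ≤ _ := by rw [hsplit]; linarith [hrest]
  rw [div_lt_iff₀ hK0] at hGR
  have hE0nn : (0:ℝ) ≤ ∑ a ∈ A0 A B G K, (deg B G a : ℝ) :=
    Finset.sum_nonneg (fun a _ => by positivity)
  have hkey : (A.card : ℝ) * ((B.card : ℝ)/(2*K)) * K = (A.card : ℝ) * B.card / 2 := by
    field_simp
  nlinarith

set_option linter.unusedSectionVars false

private lemma sum_nb : ∑ a ∈ A0 A B G K, deg B G a = ∑ b ∈ B, (nbr A B G K b).card := by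
  classical
  have := count_swap (A0 A B G K) B (fun a b => (a, b) ∈ G)
  simpa [deg, nbr] using this

private lemma sum_nb_sq :
    ∑ b ∈ B, ((nbr A B G K b).card)^2 = ∑ q ∈ (A0 A B G K) ×ˢ (A0 A B G K), cd B G q.1 q.2 := by
  classical
  have hsq : ∀ b, ((nbr A B G K b).card)^2
      = (((A0 A B G K) ×ˢ (A0 A B G K)).filter (fun q => (q.1, b) ∈ G ∧ (q.2, b) ∈ G)).card := by
    intro b
    have h : nbr A B G K b ×ˢ nbr A B G K b
        = ((A0 A B G K) ×ˢ (A0 A B G K)).filter (fun q => (q.1, b) ∈ G ∧ (q.2, b) ∈ G) := by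
      ext q
      simp only [Finset.mem_product, Finset.mem_filter, nbr]
      tauto
    rw [sq, ← Finset.card_product, h]
  simp_rw [hsq]
  exact (count_swap ((A0 A B G K) ×ˢ (A0 A B G K)) B
    (fun q b => (q.1, b) ∈ G ∧ (q.2, b) ∈ G)).symm

private lemma bad_sum (hK : 1 < K) :
    ∑ q ∈ Bad A B G K, (cd B G q.1 q.2 : ℝ) ≤ (A.card : ℝ)^2 * ((B.card : ℝ)/(256*K^3)) := by
  classical
  have hK0 : (0:ℝ) < K := lt_trans one_pos hK
  calc ∑ q ∈ Bad A B G K, (cd B G q.1 q.2 : ℝ)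
      ≤ (Bad A B G K).card • ((B.card : ℝ)/(256*K^3)) := by
        apply Finset.sum_le_card_nsmul
        intro q hq
        rw [Bad, Finset.mem_filter] at hq
        rw [le_div_iff₀ (by positivity)]
        nlinarith [hq.2]
    _ ≤ (A.card : ℝ)^2 * ((B.card : ℝ)/(256*K^3)) := by
        rw [nsmul_eq_mul]
        have h1 : ((Bad A B G K).card : ℝ) ≤ (A.card : ℝ)^2 := by
          have h2 : (Bad A B G K).card ≤ A.card * A.card := by
            calc (Bad A B G K).card ≤ ((A0 A B G K) ×ˢ (A0 A B G K)).card :=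
                  Finset.card_filter_le _ _
              _ = (A0 A B G K).card * (A0 A B G K).card := Finset.card_product _ _
              _ ≤ A.card * A.card := Nat.mul_le_mul
                  (Finset.card_le_card (A0_subset A B G K))
                  (Finset.card_le_card (A0_subset A B G K))
          calc ((Bad A B G K).card : ℝ) ≤ (A.card : ℝ) * A.card := by exact_mod_cast h2
            _ = (A.card : ℝ)^2 := by ring
        have h3 : (0:ℝ) ≤ (B.card : ℝ)/(256*K^3) := by positivity
        nlinarith
    

private lemma sum_bIn :
    ∑ b ∈ B, (bIn A B G K b).card = ∑ q ∈ Bad A B G K, cd B G q.1 q.2 := by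
  classical
  have := count_swap (Bad A B G K) B (fun q b => (q.1, b) ∈ G ∧ (q.2, b) ∈ G)
  simp only [bIn, cd] at *
  exact this.symm

private lemma exists_bs (hGAB : G ⊆ A ×ˢ B) (hK : 1 < K)
    (hG : (A.card : ℝ) * B.card / K < G.card) (hB : B.Nonempty) :
    ∃ bs ∈ B, (A.card : ℝ)^2
      ≤ 8*K^2*(((nbr A B G K bs).card : ℝ)^2 - 32*K*((bIn A B G K bs).card : ℝ)) := by
  classical
  have hK0 : (0:ℝ) < K := lt_trans one_pos hK
  have hn0 : (0:ℝ) < B.card := by exact_mod_cast Finset.card_pos.mpr hB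
  have hmnn : (0:ℝ) ≤ (A.card : ℝ) * B.card := by positivity
  obtain ⟨E0, hE0⟩ : ∃ x : ℝ, x = ∑ a ∈ A0 A B G K, (deg B G a : ℝ) := ⟨_, rfl⟩
  obtain ⟨P2, hP2⟩ : ∃ x : ℝ, x = ∑ b ∈ B, ((nbr A B G K b).card : ℝ)^2 := ⟨_, rfl⟩
  obtain ⟨SB, hSB⟩ : ∃ x : ℝ, x = ∑ q ∈ Bad A B G K, (cd B G q.1 q.2 : ℝ) := ⟨_, rfl⟩
  have hE0nn : 0 ≤ E0 := hE0 ▸ Finset.sum_nonneg (fun a _ => by positivity)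
  have hF2 : (A.card : ℝ) * B.card < 2*K*E0 := hE0 ▸ E0_lb A B G K hGAB hK hG
  have hE0nb : E0 = ∑ b ∈ B, ((nbr A B G K b).card : ℝ) := by
    rw [hE0]
    exact_mod_cast congrArg (Nat.cast : ℕ → ℝ) (sum_nb A B G K)
  have hCS : E0^2 ≤ (B.card : ℝ) * P2 := by
    rw [hE0nb, hP2]
    exact_mod_cast sq_sum_le_card_mul_sum_sq (s := B) (f := fun b => ((nbr A B G K b).card : ℝ))
  have hbadsum : SB ≤ (A.card : ℝ)^2 * ((B.card : ℝ)/(256*K^3)) := hSB ▸ bad_sum A B G K hK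
  have hsum_bIn : ∑ b ∈ B, ((bIn A B G K b).card : ℝ) = SB := by
    rw [hSB]
    exact_mod_cast congrArg (Nat.cast : ℕ → ℝ) (sum_bIn A B G K)
  -- the weighted sum
  have hsumF : (A.card : ℝ)^2*(B.card : ℝ)
      ≤ 8*K^2 * ∑ b ∈ B, (((nbr A B G K b).card : ℝ)^2 - 32*K*((bIn A B G K b).card : ℝ)) := by
    have h1 : ∑ b ∈ B, (((nbr A B G K b).card : ℝ)^2 - 32*K*((bIn A B G K b).card : ℝ))
        = P2 - 32*K*SB := by
      rw [Finset.sum_sub_distrib, ← Finset.mul_sum, hsum_bIn, hP2]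
    have hsq : ((A.card : ℝ)*B.card)*((A.card : ℝ)*B.card) < (2*K*E0)*(2*K*E0) :=
      mul_lt_mul'' hF2 hF2 hmnn hmnn
    have ha : 4*K^2*E0^2 ≤ 4*K^2*((B.card : ℝ) * P2) :=
      mul_le_mul_of_nonneg_left hCS (by positivity)
    have hb : (A.card : ℝ)^2*(B.card : ℝ)^2 < 4*K^2*((B.card : ℝ)*P2) := by nlinarith
    have h3 : (A.card : ℝ)^2*(B.card : ℝ) ≤ 4*K^2*P2 := by nlinarith
    have h5 := mul_le_mul_of_nonneg_left hbadsum (show (0:ℝ) ≤ 256*K^3 by positivity)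
    have h6 : 256*K^3 * ((A.card : ℝ)^2 * ((B.card : ℝ)/(256*K^3))) = (A.card : ℝ)^2*(B.card : ℝ) := by
      field_simp
    rw [h6] at h5
    rw [h1]
    nlinarith
  obtain ⟨bs, hbsB, hbsmax⟩ := Finset.exists_max_image B
    (fun b => ((nbr A B G K b).card : ℝ)^2 - 32*K*((bIn A B G K b).card : ℝ)) hB
  refine ⟨bs, hbsB, ?_⟩
  have h1 : ∑ b ∈ B, (((nbr A B G K b).card : ℝ)^2 - 32*K*((bIn A B G K b).card : ℝ))
      ≤ B.card • (((nbr A B G K bs).card : ℝ)^2 - 32*K*((bIn A B G K bs).card : ℝ)) :=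
    Finset.sum_le_card_nsmul _ _ _ hbsmax
  rw [nsmul_eq_mul] at h1
  obtain ⟨Fb, hFb⟩ : ∃ x : ℝ,
      x = ((nbr A B G K bs).card : ℝ)^2 - 32*K*((bIn A B G K bs).card : ℝ) := ⟨_, rfl⟩
  rw [← hFb] at h1 ⊢
  have h1' := mul_le_mul_of_nonneg_left h1 (show (0:ℝ) ≤ 8*K^2 by positivity)
  have h2 : (A.card : ℝ)^2*(B.card : ℝ) ≤ 8*K^2*((B.card : ℝ) * Fb) := by linarith
  nlinarith [h2, hn0]

private lemma nbr_subset_A0 (b : Z) : nbr A B G K b ⊆ A0 A B G K := Finset.filter_subset _ _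

private lemma Ap_subset_nbr (bs : Z) : Ap A B G K bs ⊆ nbr A B G K bs := Finset.filter_subset _ _

private lemma Bp_subset (bs : Z) : Bp A B G K bs ⊆ B := Finset.filter_subset _ _

private lemma mem_Ap_bcnt {bs a : Z} (ha : a ∈ Ap A B G K bs) :
    (bcnt A B G K bs a : ℝ) * (16*K) ≤ ((nbr A B G K bs).card : ℝ) := by
  rw [Ap, Finset.mem_filter] at ha
  exact ha.2

private lemma mem_Bp_deg {bs b : Z} (hb : b ∈ Bp A B G K bs) :
    ((Ap A B G K bs).card : ℝ)
      ≤ 4*K*(((Ap A B G K bs).filter (fun a => (a, b) ∈ G)).card : ℝ) := by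
  rw [Bp, Finset.mem_filter] at hb
  exact hb.2

private lemma Ap_bounds (bs : Z) (hK : 1 < K) (hm1 : (1:ℝ) ≤ A.card)
    (hsel : (A.card : ℝ)^2
      ≤ 8*K^2*(((nbr A B G K bs).card : ℝ)^2 - 32*K*((bIn A B G K bs).card : ℝ))) :
    (A.card : ℝ) ≤ 3*K*((nbr A B G K bs).card : ℝ) ∧
    ((nbr A B G K bs).card : ℝ) ≤ 2*((Ap A B G K bs).card : ℝ) := by
  classical
  have hK0 : (0:ℝ) < K := lt_trans one_pos hK
  have hucnn : (0:ℝ) ≤ ((nbr A B G K bs).card : ℝ) := Nat.cast_nonneg _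
  have hbcnn : (0:ℝ) ≤ ((bIn A B G K bs).card : ℝ) := Nat.cast_nonneg _
  have h8 : (A.card : ℝ)^2 ≤ (3*K*((nbr A B G K bs).card : ℝ))^2 := by
    nlinarith [mul_nonneg (mul_nonneg hK0.le hK0.le) (mul_nonneg hK0.le hbcnn),
      sq_nonneg (K*((nbr A B G K bs).card : ℝ))]
  have hUm : (A.card : ℝ) ≤ 3*K*((nbr A B G K bs).card : ℝ) :=
    le_of_pow_le_pow_left₀ two_ne_zero (mul_nonneg (by linarith) hucnn)
      (by exact_mod_cast h8)
  refine ⟨hUm, ?_⟩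
  have huc0 : (0:ℝ) < ((nbr A B G K bs).card : ℝ) := by nlinarith [hUm, hm1, hK0, hucnn]
  have hbcU : 32*K*((bIn A B G K bs).card : ℝ) ≤ ((nbr A B G K bs).card : ℝ)^2 := by
    nlinarith [mul_pos hK0 hK0, hm1]
  -- counting bad pairs inside U
  have h1 : ∑ a ∈ nbr A B G K bs, bcnt A B G K bs a
      = ((nbr A B G K bs ×ˢ nbr A B G K bs).filter (fun q => q ∈ Bad A B G K)).card := by
    rw [Finset.card_filter, Finset.sum_product]
    refine Finset.sum_congr rfl (fun a _ => ?_)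
    rw [bcnt, Finset.card_filter]
  have h2 : bIn A B G K bs
      = (Bad A B G K).filter (fun q => q.1 ∈ nbr A B G K bs ∧ q.2 ∈ nbr A B G K bs) := by
    rw [bIn]
    apply Finset.filter_congr
    intro q hq
    rw [Bad, Finset.mem_filter] at hq
    have hq1 := Finset.mem_product.mp hq.1
    simp only [nbr, Finset.mem_filter]
    constructor
    · intro h; exact ⟨⟨hq1.1, h.1⟩, ⟨hq1.2, h.2⟩⟩
    · intro h; exact ⟨h.1.2, h.2.2⟩
  have h3 : (nbr A B G K bs ×ˢ nbr A B G K bs).filter (fun q => q ∈ Bad A B G K)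
      = (Bad A B G K).filter (fun q => q.1 ∈ nbr A B G K bs ∧ q.2 ∈ nbr A B G K bs) := by
    ext q
    simp only [Finset.mem_filter, Finset.mem_product]
    tauto
  have hsum_bcnt : ∑ a ∈ nbr A B G K bs, bcnt A B G K bs a = (bIn A B G K bs).card := by
    rw [h1, h3, ← h2]
  -- the heavy vertices
  have hHcard : (Ap A B G K bs).card
      + ((nbr A B G K bs).filter (fun a =>
          ¬ ((bcnt A B G K bs a : ℝ) * (16*K) ≤ ((nbr A B G K bs).card : ℝ)))).card
      = (nbr A B G K bs).card := by
    rw [Ap]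
    exact Finset.card_filter_add_card_filter_not _
  have hHbound : (((nbr A B G K bs).filter (fun a =>
      ¬ ((bcnt A B G K bs a : ℝ) * (16*K) ≤ ((nbr A B G K bs).card : ℝ)))).card : ℝ)
        * ((nbr A B G K bs).card : ℝ)
      ≤ 16*K*((bIn A B G K bs).card : ℝ) := by
    have hstep : (((nbr A B G K bs).filter (fun a =>
        ¬ ((bcnt A B G K bs a : ℝ) * (16*K) ≤ ((nbr A B G K bs).card : ℝ)))).card : ℝ)
          * ((nbr A B G K bs).card : ℝ)
        ≤ ∑ a ∈ (nbr A B G K bs).filter (fun a =>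
            ¬ ((bcnt A B G K bs a : ℝ) * (16*K) ≤ ((nbr A B G K bs).card : ℝ))),
            (bcnt A B G K bs a : ℝ) * (16*K) := by
      have := Finset.card_nsmul_le_sum ((nbr A B G K bs).filter (fun a =>
          ¬ ((bcnt A B G K bs a : ℝ) * (16*K) ≤ ((nbr A B G K bs).card : ℝ))))
        (fun a => (bcnt A B G K bs a : ℝ) * (16*K)) ((nbr A B G K bs).card : ℝ)
        (fun a ha => le_of_lt (lt_of_not_ge (Finset.mem_filter.mp ha).2))
      rw [nsmul_eq_mul] at this
      exact this
    have hmono : ∑ a ∈ (nbr A B G K bs).filter (fun a =>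
          ¬ ((bcnt A B G K bs a : ℝ) * (16*K) ≤ ((nbr A B G K bs).card : ℝ))),
          (bcnt A B G K bs a : ℝ) * (16*K)
        ≤ ∑ a ∈ nbr A B G K bs, (bcnt A B G K bs a : ℝ) * (16*K) := by
      apply Finset.sum_le_sum_of_subset_of_nonneg (Finset.filter_subset _ _)
      intro a _ _
      positivity
    have hval : ∑ a ∈ nbr A B G K bs, (bcnt A B G K bs a : ℝ) * (16*K)
        = 16*K*((bIn A B G K bs).card : ℝ) := by
      rw [← Finset.sum_mul]
      have : ∑ a ∈ nbr A B G K bs, (bcnt A B G K bs a : ℝ) = ((bIn A B G K bs).card : ℝ) := by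
        exact_mod_cast congrArg (Nat.cast : ℕ → ℝ) hsum_bcnt
      rw [this]
      ring
    linarith
  have hHc : (((nbr A B G K bs).filter (fun a =>
      ¬ ((bcnt A B G K bs a : ℝ) * (16*K) ≤ ((nbr A B G K bs).card : ℝ)))).card : ℝ)
      ≤ ((nbr A B G K bs).card : ℝ) / 2 := by
    rw [le_div_iff₀ (by norm_num : (0:ℝ) < 2)]
    nlinarith
  have hAk : ((Ap A B G K bs).card : ℝ)
      + (((nbr A B G K bs).filter (fun a =>
          ¬ ((bcnt A B G K bs a : ℝ) * (16*K) ≤ ((nbr A B G K bs).card : ℝ)))).card : ℝ)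
      = ((nbr A B G K bs).card : ℝ) := by
    exact_mod_cast congrArg (Nat.cast : ℕ → ℝ) hHcard
  linarith

private lemma Bp_bound (bs : Z) (hK : 1 < K)
    (hApos : (0:ℝ) < ((Ap A B G K bs).card : ℝ)) :
    (B.card : ℝ) ≤ 4*K*((Bp A B G K bs).card : ℝ) := by
  classical
  have hK0 : (0:ℝ) < K := lt_trans one_pos hK
  -- every a ∈ Ap has large degree
  have hdegAp : ∀ a ∈ Ap A B G K bs, (B.card : ℝ) ≤ 2*K*(deg B G a) := by
    intro a ha
    exact mem_A0_deg A B G K (nbr_subset_A0 A B G K bs (Ap_subset_nbr A B G K bs ha))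
  have hE' : ((Ap A B G K bs).card : ℝ) * B.card ≤ 2*K*∑ a ∈ Ap A B G K bs, (deg B G a : ℝ) := by
    have := Finset.card_nsmul_le_sum (Ap A B G K bs) (fun a => 2*K*(deg B G a : ℝ))
      ((B.card : ℝ)) (fun a ha => hdegAp a ha)
    rw [nsmul_eq_mul] at this
    rw [← Finset.mul_sum] at this
    nlinarith
  have hswap : ∑ a ∈ Ap A B G K bs, (deg B G a : ℝ)
      = ∑ b ∈ B, (((Ap A B G K bs).filter (fun a => (a, b) ∈ G)).card : ℝ) := by
    exact_mod_cast congrArg (Nat.cast : ℕ → ℝ)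
      (count_swap (Ap A B G K bs) B (fun a b => (a, b) ∈ G))
  have hrest : ∑ b ∈ B.filter (fun b => ¬ (((Ap A B G K bs).card : ℝ)
        ≤ 4*K*(((Ap A B G K bs).filter (fun a => (a, b) ∈ G)).card : ℝ))),
        (((Ap A B G K bs).filter (fun a => (a, b) ∈ G)).card : ℝ)
      ≤ (B.card : ℝ) * (((Ap A B G K bs).card : ℝ)/(4*K)) := by
    calc _ ≤ (B.filter (fun b => ¬ (((Ap A B G K bs).card : ℝ)
        ≤ 4*K*(((Ap A B G K bs).filter (fun a => (a, b) ∈ G)).card : ℝ)))).card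
          • (((Ap A B G K bs).card : ℝ)/(4*K)) := by
          apply Finset.sum_le_card_nsmul
          intro b hb
          have := (Finset.mem_filter.mp hb).2
          push_neg at this
          rw [le_div_iff₀ (by positivity)]
          nlinarith
      _ ≤ (B.card : ℝ) * (((Ap A B G K bs).card : ℝ)/(4*K)) := by
          rw [nsmul_eq_mul]
          have h1 : ((B.filter (fun b => ¬ (((Ap A B G K bs).card : ℝ)
              ≤ 4*K*(((Ap A B G K bs).filter (fun a => (a, b) ∈ G)).card : ℝ)))).card : ℝ)
              ≤ (B.card : ℝ) := Nat.cast_le.mpr (Finset.card_filter_le _ _)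
          have h2 : (0:ℝ) ≤ ((Ap A B G K bs).card : ℝ)/(4*K) := by positivity
          nlinarith
  have hmain : ∑ b ∈ Bp A B G K bs, (((Ap A B G K bs).filter (fun a => (a, b) ∈ G)).card : ℝ)
      ≤ ((Bp A B G K bs).card : ℝ) * ((Ap A B G K bs).card : ℝ) := by
    have := Finset.sum_le_card_nsmul (Bp A B G K bs)
      (fun b => (((Ap A B G K bs).filter (fun a => (a, b) ∈ G)).card : ℝ))
      (((Ap A B G K bs).card : ℝ))
      (fun b _ => Nat.cast_le.mpr (Finset.card_filter_le _ _))
    rw [nsmul_eq_mul] at this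
    exact this
  have hsplitB : ∑ b ∈ B, (((Ap A B G K bs).filter (fun a => (a, b) ∈ G)).card : ℝ)
      = ∑ b ∈ Bp A B G K bs, (((Ap A B G K bs).filter (fun a => (a, b) ∈ G)).card : ℝ)
        + ∑ b ∈ B.filter (fun b => ¬ (((Ap A B G K bs).card : ℝ)
            ≤ 4*K*(((Ap A B G K bs).filter (fun a => (a, b) ∈ G)).card : ℝ))),
            (((Ap A B G K bs).filter (fun a => (a, b) ∈ G)).card : ℝ) := by
    rw [Bp]
    exact (Finset.sum_filter_add_sum_filter_not B _ _).symm
  have hchain : ((Ap A B G K bs).card : ℝ) * B.card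
      ≤ 2*K*(((Bp A B G K bs).card : ℝ) * ((Ap A B G K bs).card : ℝ)
        + (B.card : ℝ) * (((Ap A B G K bs).card : ℝ)/(4*K))) := by
    have h := hE'
    rw [hswap, hsplitB] at h
    nlinarith
  have hexp : 2*K*((B.card : ℝ) * (((Ap A B G K bs).card : ℝ)/(4*K)))
      = (B.card : ℝ) * ((Ap A B G K bs).card : ℝ) / 2 := by
    field_simp
    ring
  nlinarith

private lemma path_bound (bs : Z) (hGAB : G ⊆ A ×ˢ B) (hK : 1 < K)
    (hUm : (A.card : ℝ) ≤ 3*K*((nbr A B G K bs).card : ℝ))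
    (hU2 : ((nbr A B G K bs).card : ℝ) ≤ 2*((Ap A B G K bs).card : ℝ))
    {s : Z} (hs : s ∈ Ap A B G K bs + Bp A B G K bs) :
    (A.card : ℝ) * B.card ≤ 12288*K^5 *
      ((((G.image fun p => p.1+p.2) ×ˢ (G.image fun p => p.1+p.2) ×ˢ
          (G.image fun p => p.1+p.2)).filter
        (fun u => u.1 - u.2.1 + u.2.2 = s)).card : ℝ) := by
  classical
  have hK0 : (0:ℝ) < K := lt_trans one_pos hK
  obtain ⟨a, ha, b, hb, hab⟩ := Finset.mem_add.mp hs
  have haU : a ∈ nbr A B G K bs := Ap_subset_nbr A B G K bs ha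
  have haA0 : a ∈ A0 A B G K := nbr_subset_A0 A B G K bs haU
  -- the neighbourhood of b inside A'
  have hbB' : ((Ap A B G K bs).card : ℝ)
      ≤ 4*K*(((Ap A B G K bs).filter (fun a₁ => (a₁, b) ∈ G)).card : ℝ) :=
    mem_Bp_deg A B G K hb
  -- remove bad partners
  set NA : Finset Z := (Ap A B G K bs).filter (fun a₁ => (a₁, b) ∈ G) with hNA
  set Q : Finset Z := NA.filter (fun a₁ => ¬ ((a, a₁) ∈ Bad A B G K)) with hQ
  have hQR : (NA.filter (fun a₁ => (a, a₁) ∈ Bad A B G K)).card + Q.card = NA.card := by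
    rw [hQ]
    exact Finset.card_filter_add_card_filter_not _
  have hRsub : NA.filter (fun a₁ => (a, a₁) ∈ Bad A B G K)
      ⊆ (nbr A B G K bs).filter (fun a' => (a, a') ∈ Bad A B G K) := by
    apply Finset.filter_subset_filter
    intro x hx
    exact Ap_subset_nbr A B G K bs (Finset.mem_filter.mp hx).1
  have hRbound : ((NA.filter (fun a₁ => (a, a₁) ∈ Bad A B G K)).card : ℝ) * (16*K)
      ≤ ((nbr A B G K bs).card : ℝ) := by
    have h1 : ((NA.filter (fun a₁ => (a, a₁) ∈ Bad A B G K)).card : ℝ)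
        ≤ (bcnt A B G K bs a : ℝ) := by
      rw [bcnt]
      exact_mod_cast Nat.cast_le.mpr (Finset.card_le_card hRsub)
    have h2 := mem_Ap_bcnt A B G K ha
    nlinarith
  have hQm : (A.card : ℝ) ≤ 48*K^2*(Q.card : ℝ) := by
    have h1 : (NA.card : ℝ)
        = ((NA.filter (fun a₁ => (a, a₁) ∈ Bad A B G K)).card : ℝ) + (Q.card : ℝ) := by
      exact_mod_cast congrArg (Nat.cast : ℕ → ℝ) hQR.symm
    nlinarith
  -- the path set
  set T : Finset (Z × Z) := (Q ×ˢ B).filter (fun r => (a, r.2) ∈ G ∧ (r.1, r.2) ∈ G) with hT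
  have hTcard : T.card = ∑ a₁ ∈ Q, cd B G a a₁ := by
    rw [hT, Finset.card_filter, Finset.sum_product]
    refine Finset.sum_congr rfl (fun a₁ _ => ?_)
    rw [cd, Finset.card_filter]
  have hcdlb : ∀ a₁ ∈ Q, (B.card : ℝ) / (256*K^3) ≤ (cd B G a a₁ : ℝ) := by
    intro a₁ ha₁
    have ha₁NA := (Finset.mem_filter.mp ha₁).1
    have hnbad : ¬ ((a, a₁) ∈ Bad A B G K) := (Finset.mem_filter.mp ha₁).2
    have ha₁A0 : a₁ ∈ A0 A B G K :=
      nbr_subset_A0 A B G K bs (Ap_subset_nbr A B G K bs (Finset.mem_filter.mp ha₁NA).1)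
    have hmem : (a, a₁) ∈ (A0 A B G K) ×ˢ (A0 A B G K) := Finset.mem_product.mpr ⟨haA0, ha₁A0⟩
    rw [Bad, Finset.mem_filter] at hnbad
    push_neg at hnbad
    have := hnbad hmem
    rw [div_le_iff₀ (by positivity)]
    nlinarith
  have hTlb : (Q.card : ℝ) * ((B.card : ℝ) / (256*K^3)) ≤ (T.card : ℝ) := by
    have h := Finset.card_nsmul_le_sum Q (fun a₁ => (cd B G a a₁ : ℝ))
      ((B.card : ℝ) / (256*K^3)) hcdlb
    rw [nsmul_eq_mul] at h
    calc (Q.card : ℝ) * ((B.card : ℝ) / (256*K^3)) ≤ ∑ a₁ ∈ Q, (cd B G a a₁ : ℝ) := h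
      _ = (T.card : ℝ) := by rw [hTcard]; push_cast; ring
  -- injection into the fiber
  have hinj : (T.card : ℝ) ≤ ((((G.image fun p => p.1+p.2) ×ˢ (G.image fun p => p.1+p.2) ×ˢ
      (G.image fun p => p.1+p.2)).filter (fun u => u.1 - u.2.1 + u.2.2 = s)).card : ℝ) := by
    have h := Finset.card_le_card_of_injOn
      (f := fun r : Z × Z => (a + r.2, (r.1 + r.2, r.1 + b)))
      (s := T)
      (t := ((G.image fun p => p.1+p.2) ×ˢ (G.image fun p => p.1+p.2) ×ˢ
        (G.image fun p => p.1+p.2)).filter (fun u => u.1 - u.2.1 + u.2.2 = s))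
      ?_ ?_
    · exact_mod_cast h
    · intro r hr
      rw [Finset.mem_coe, Finset.mem_filter, Finset.mem_product] at hr
      obtain ⟨⟨hrQ, hrB⟩, hG1, hG2⟩ := hr
      have hG3 : (r.1, b) ∈ G := by
        have := (Finset.mem_filter.mp hrQ).1
        exact (Finset.mem_filter.mp this).2
      rw [Finset.mem_coe, Finset.mem_filter, Finset.mem_product, Finset.mem_product]
      refine ⟨⟨Finset.mem_image.mpr ⟨(a, r.2), hG1, rfl⟩,
        Finset.mem_image.mpr ⟨(r.1, r.2), hG2, rfl⟩,
        Finset.mem_image.mpr ⟨(r.1, b), hG3, rfl⟩⟩, ?_⟩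
      simp only
      rw [← hab]
      abel
    · intro r hr r' hr' heq
      simp only [Prod.mk.injEq] at heq
      obtain ⟨h1, h2, h3⟩ := heq
      exact Prod.ext (add_right_cancel h3) (add_left_cancel h1)
  -- combine
  have hTm : (A.card : ℝ) * B.card ≤ 12288*K^5 * (T.card : ℝ) := by
    have h1 : 12288*K^5 * ((Q.card : ℝ) * ((B.card : ℝ) / (256*K^3)))
        = 48*K^2*(Q.card : ℝ) * (B.card : ℝ) := by
      field_simp
      ring
    have h2 : (A.card : ℝ) * B.card ≤ 48*K^2*(Q.card : ℝ) * (B.card : ℝ) := by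
      have hBnn : (0:ℝ) ≤ (B.card : ℝ) := Nat.cast_nonneg _
      nlinarith
    have h3 := mul_le_mul_of_nonneg_left hTlb (show (0:ℝ) ≤ 12288*K^5 by positivity)
    linarith [h1 ▸ h3]
  have h4 := mul_le_mul_of_nonneg_left hinj (show (0:ℝ) ≤ 12288*K^5 by positivity)
  linarith

end Lemmas

theorem bsg_main (Z : Type) [AddCommGroup Z] [DecidableEq Z]
    (A B : Finset Z) (G : Finset (Z × Z)) (K : ℝ)
    (hGAB : G ⊆ A ×ˢ B) (hK : 1 < K)
    (hG : (A.card : ℝ) * B.card / K < G.card)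
    (hS : ((G.image fun p => p.1 + p.2).card : ℝ) ≤ K * Real.sqrt ((A.card : ℝ) * B.card)) :
    ∃ A' ⊆ A, ∃ B' ⊆ B,
      (1/6 : ℝ) * A.card / K ≤ (A'.card : ℝ) ∧
      (1/6 : ℝ) * B.card / K ≤ (B'.card : ℝ) ∧
      ((A' + B').card : ℝ) ≤ 12288 * K ^ 8 * Real.sqrt ((A.card : ℝ) * B.card) := by
  classical
  have hK0 : (0:ℝ) < K := lt_trans one_pos hK
  have hGpos : (0:ℝ) < G.card := lt_of_le_of_lt (by positivity) hG
  have hGne : G.Nonempty := Finset.card_pos.mp (by exact_mod_cast hGpos)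
  obtain ⟨p₀, hp₀⟩ := hGne
  have hp₀' := Finset.mem_product.mp (hGAB hp₀)
  have hAne : A.Nonempty := ⟨p₀.1, hp₀'.1⟩
  have hBne : B.Nonempty := ⟨p₀.2, hp₀'.2⟩
  have hm1 : (1:ℝ) ≤ A.card := Nat.one_le_cast.mpr (Finset.card_pos.mpr hAne)
  have hn1 : (1:ℝ) ≤ B.card := Nat.one_le_cast.mpr (Finset.card_pos.mpr hBne)
  obtain ⟨bs, hbsB, hsel⟩ := exists_bs A B G K hGAB hK hG hBne
  obtain ⟨hUm, hU2⟩ := Ap_bounds A B G K bs hK hm1 hsel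
  have hApos : (0:ℝ) < ((Ap A B G K bs).card : ℝ) := by nlinarith
  have hBp := Bp_bound A B G K bs hK hApos
  refine ⟨Ap A B G K bs,
    fun x hx => A0_subset A B G K (nbr_subset_A0 A B G K bs (Ap_subset_nbr A B G K bs hx)),
    Bp A B G K bs, Bp_subset A B G K bs, ?_, ?_, ?_⟩
  · rw [div_le_iff₀ hK0]
    nlinarith
  · rw [div_le_iff₀ hK0]
    nlinarith
  -- the sumset bound
  have hmn1 : (1:ℝ) ≤ (A.card : ℝ) * B.card := by nlinarith
  have hmn0 : (0:ℝ) < (A.card : ℝ) * B.card := by linarith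
  have hplb := fun s hs => path_bound A B G K bs hGAB hK hUm hU2 (s := s) hs
  -- sum over fibers
  have hfib : ∑ s ∈ Ap A B G K bs + Bp A B G K bs,
      ((((G.image fun p => p.1+p.2) ×ˢ (G.image fun p => p.1+p.2) ×ˢ
        (G.image fun p => p.1+p.2)).filter (fun u => u.1 - u.2.1 + u.2.2 = s)).card : ℝ)
      ≤ (((G.image fun p => p.1+p.2).card : ℝ))^3 := by
    have h1 := sum_fiber_le
      ((G.image fun p => p.1+p.2) ×ˢ (G.image fun p => p.1+p.2) ×ˢ (G.image fun p => p.1+p.2))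
      (Ap A B G K bs + Bp A B G K bs) (fun u => u.1 - u.2.1 + u.2.2)
    have h2 : (((G.image fun p => p.1+p.2) ×ˢ (G.image fun p => p.1+p.2) ×ˢ
        (G.image fun p => p.1+p.2)).card : ℝ) = (((G.image fun p => p.1+p.2).card : ℝ))^3 := by
      rw [Finset.card_product, Finset.card_product]
      push_cast
      ring
    calc ∑ s ∈ Ap A B G K bs + Bp A B G K bs,
        ((((G.image fun p => p.1+p.2) ×ˢ (G.image fun p => p.1+p.2) ×ˢ
          (G.image fun p => p.1+p.2)).filter (fun u => u.1 - u.2.1 + u.2.2 = s)).card : ℝ)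
        ≤ (((G.image fun p => p.1+p.2) ×ˢ (G.image fun p => p.1+p.2) ×ˢ
          (G.image fun p => p.1+p.2)).card : ℝ) := by exact_mod_cast h1
      _ = _ := h2
  -- cube of S bound
  have hsq : Real.sqrt ((A.card : ℝ) * B.card)^2 = (A.card : ℝ) * B.card :=
    Real.sq_sqrt (le_of_lt hmn0)
  have hsqnn : (0:ℝ) ≤ Real.sqrt ((A.card : ℝ) * B.card) := Real.sqrt_nonneg _
  have hScube : (((G.image fun p => p.1+p.2).card : ℝ))^3
      ≤ K^3 * ((A.card : ℝ) * B.card) * Real.sqrt ((A.card : ℝ) * B.card) := by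
    have h1 : (((G.image fun p => p.1+p.2).card : ℝ))^3
        ≤ (K * Real.sqrt ((A.card : ℝ) * B.card))^3 :=
      pow_le_pow_left₀ (Nat.cast_nonneg _) hS 3
    have h2 : (K * Real.sqrt ((A.card : ℝ) * B.card))^3
        = K^3 * ((A.card : ℝ) * B.card) * Real.sqrt ((A.card : ℝ) * B.card) := by
      have h3 : Real.sqrt ((A.card : ℝ) * B.card)^3
          = ((A.card : ℝ) * B.card) * Real.sqrt ((A.card : ℝ) * B.card) := by
        rw [pow_succ, hsq]
      rw [mul_pow, h3]
      ring
    linarith [h2 ▸ h1]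
  -- the total count
  have htot : ((Ap A B G K bs + Bp A B G K bs).card : ℝ) * ((A.card : ℝ) * B.card)
      ≤ 12288*K^8 * ((A.card : ℝ) * B.card) * Real.sqrt ((A.card : ℝ) * B.card) := by
    have h1 : ((Ap A B G K bs + Bp A B G K bs).card : ℝ) * ((A.card : ℝ) * B.card)
        ≤ ∑ s ∈ Ap A B G K bs + Bp A B G K bs, 12288*K^5 *
          ((((G.image fun p => p.1+p.2) ×ˢ (G.image fun p => p.1+p.2) ×ˢ
            (G.image fun p => p.1+p.2)).filter (fun u => u.1 - u.2.1 + u.2.2 = s)).card : ℝ) := by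
      have h := Finset.card_nsmul_le_sum (Ap A B G K bs + Bp A B G K bs)
        (fun s => 12288*K^5 *
          ((((G.image fun p => p.1+p.2) ×ˢ (G.image fun p => p.1+p.2) ×ˢ
            (G.image fun p => p.1+p.2)).filter (fun u => u.1 - u.2.1 + u.2.2 = s)).card : ℝ))
        ((A.card : ℝ) * B.card) hplb
      rw [nsmul_eq_mul] at h
      exact h
    have h2 : ∑ s ∈ Ap A B G K bs + Bp A B G K bs, 12288*K^5 *
          ((((G.image fun p => p.1+p.2) ×ˢ (G.image fun p => p.1+p.2) ×ˢ
            (G.image fun p => p.1+p.2)).filter (fun u => u.1 - u.2.1 + u.2.2 = s)).card : ℝ)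
        ≤ 12288*K^5 * (((G.image fun p => p.1+p.2).card : ℝ))^3 := by
      rw [← Finset.mul_sum]
      exact mul_le_mul_of_nonneg_left hfib (by positivity)
    have h3 : 12288*K^5 * (((G.image fun p => p.1+p.2).card : ℝ))^3
        ≤ 12288*K^5 * (K^3 * ((A.card : ℝ) * B.card) * Real.sqrt ((A.card : ℝ) * B.card)) :=
      mul_le_mul_of_nonneg_left hScube (by positivity)
    have h4 : 12288*K^5 * (K^3 * ((A.card : ℝ) * B.card) * Real.sqrt ((A.card : ℝ) * B.card))
        = 12288*K^8 * ((A.card : ℝ) * B.card) * Real.sqrt ((A.card : ℝ) * B.card) := by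
      ring
    linarith [h4 ▸ h3]
  nlinarith [htot, hmn0]

end BSG7

/-- Balog–Szemerédi–Gowers theorem. -/
theorem stmt_7 : ∃ (c Cc : ℝ) (n : ℕ), 0 < c ∧ 0 < Cc ∧
    ∀ (Z : Type) [AddCommGroup Z] [DecidableEq Z]
      (A B : Finset Z) (G : Finset (Z × Z)) (K : ℝ),
      G ⊆ A ×ˢ B → 1 < K →
      (A.card : ℝ) * B.card / K < G.card →
      ((G.image fun p => p.1 + p.2).card : ℝ) ≤
        K * Real.sqrt ((A.card : ℝ) * B.card) →
      ∃ A' ⊆ A, ∃ B' ⊆ B,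
        c * A.card / K ≤ (A'.card : ℝ) ∧
        c * B.card / K ≤ (B'.card : ℝ) ∧
        ((A' + B').card : ℝ) ≤ Cc * K ^ n * Real.sqrt ((A.card : ℝ) * B.card) := by
  exact ⟨1/6, 12288, 8, by norm_num, by norm_num,
    fun Z _ _ A B G K h1 h2 h3 h4 => BSG7.bsg_main Z A B G K h1 h2 h3 h4⟩
end

section
/- Let 0 < δ ≪ 1 be dyadic, 0 < σ < 1, K ≫ 1, ε > 0, and let A ⊆ [0,1] be a union of δ-intervals with |A| ≤ δ^{1−σ−ε}. For each dyadic δ < δ' ≤ 1 define A_{δ'} = {x ∈ ℝ : |A ∩ B(x, δ')| ≥ δ^{−Kε}·δ·(δ'/δ)^σ}, and let A* be the δ-neighborhood of A \ ⋃_{δ<δ'≤1} A_{δ'}. Then A ⊆ A* ∪ ⋃_{δ<δ'≤1} A_{δ'}, each A_{δ'} can be covered by ≲ δ^{Kε−Cε}·(δ')^{−σ} intervals of length δ', and A* satisfies |A* ∩ B(x, r)| ≲ δ^{−Kε−Cε}·δ·(r/δ)^σ for all x and δ < r < 1. -/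
open MeasureTheory Metric

private lemma two_rpow_pos (a : ℝ) : 0 < (2:ℝ) ^ a := Real.rpow_pos_of_pos two_pos a

private lemma dyadic_choice {s : ℝ} (h0 : 0 < s) (h1 : s ≤ 1) :
    ∃ k : ℕ, s ≤ (2:ℝ) ^ (-(k:ℝ)) ∧ (2:ℝ) ^ (-(k:ℝ)) < 2 * s := by
  have hsinv0 : 0 < s⁻¹ := inv_pos.mpr h0
  have hsinv : 1 ≤ s⁻¹ := one_le_inv_iff₀.mpr ⟨h0, h1⟩
  have hlb : 0 ≤ Real.logb 2 s⁻¹ := Real.logb_nonneg one_lt_two hsinv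
  set k := ⌊Real.logb 2 s⁻¹⌋₊ with hk
  have h1' : (2:ℝ) ^ ((k : ℝ)) ≤ s⁻¹ := by
    calc (2:ℝ) ^ ((k:ℝ)) ≤ 2 ^ (Real.logb 2 s⁻¹) :=
          Real.rpow_le_rpow_of_exponent_le one_le_two (Nat.floor_le hlb)
      _ = s⁻¹ := Real.rpow_logb two_pos (by norm_num) hsinv0
  have h2' : s⁻¹ < 2 ^ ((k:ℝ) + 1) := by
    calc s⁻¹ = 2 ^ (Real.logb 2 s⁻¹) := (Real.rpow_logb two_pos (by norm_num) hsinv0).symm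
      _ < _ := Real.rpow_lt_rpow_of_exponent_lt one_lt_two (Nat.lt_floor_add_one _)
  refine ⟨k, ?_, ?_⟩
  · rw [Real.rpow_neg two_pos.le]
    calc s = (s⁻¹)⁻¹ := by rw [inv_inv]
      _ ≤ ((2:ℝ) ^ ((k:ℝ)))⁻¹ := by gcongr
  · have h3 : (2:ℝ) ^ (-((k:ℝ)+1)) < s := by
      rw [Real.rpow_neg two_pos.le]
      calc ((2:ℝ) ^ ((k:ℝ)+1))⁻¹ < (s⁻¹)⁻¹ := by gcongr
        _ = s := by rw [inv_inv]
    have h4 : (2:ℝ) ^ (-(k:ℝ)) = 2 * (2:ℝ) ^ (-((k:ℝ)+1)) := by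
      rw [show -(k:ℝ) = (-((k:ℝ)+1)) + 1 by ring, Real.rpow_add two_pos, Real.rpow_one]; ring
    rw [h4]; linarith

private lemma count_lemma {A : Set ℝ} (hAfin : volume A ≠ ⊤)
    {t d : ℝ} (hd : 0 < d) (T : Finset ℤ) (E : ℤ → Set ℝ)
    (hEm : ∀ n ∈ T, MeasurableSet (E n)) (hEA : ∀ n ∈ T, E n ⊆ A)
    (hEt : ∀ n ∈ T, t ≤ (volume (E n)).toReal)
    (hEloc : ∀ n ∈ T, E n ⊆ Set.Ico (((n:ℝ) - 1) * d) (((n:ℝ) + 3) * d)) :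
    t * T.card ≤ 4 * (volume A).toReal := by
  classical
  have hcard : T.card = ∑ r ∈ Finset.range 4, (T.filter (fun n => (n % 4).toNat = r)).card :=
    Finset.card_eq_sum_card_fiberwise (fun n _ => Finset.mem_range.mpr (by omega))
  have key : ∀ r, t * ((T.filter (fun n => (n % 4).toNat = r)).card : ℝ) ≤ (volume A).toReal := by
    intro r
    set Tr := T.filter (fun n => (n % 4).toNat = r) with hTr
    have hsub : ∀ n ∈ Tr, n ∈ T := fun n hn => (Finset.mem_filter.mp hn).1
    have hdisj : (Tr : Set ℤ).PairwiseDisjoint E := by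
      intro a ha b hb hab
      rw [Finset.mem_coe, hTr, Finset.mem_filter] at ha hb
      have hd4 : a + 4 ≤ b ∨ b + 4 ≤ a := by omega
      refine Disjoint.mono (hEloc a ha.1) (hEloc b hb.1) ?_
      rw [Set.Ico_disjoint_Ico]
      rcases hd4 with h | h
      · refine le_trans (min_le_left _ _) (le_trans ?_ (le_max_right _ _))
        have : (a:ℝ) + 4 ≤ (b:ℝ) := by exact_mod_cast h
        nlinarith
      · refine le_trans (min_le_right _ _) (le_trans ?_ (le_max_left _ _))
        have : (b:ℝ) + 4 ≤ (a:ℝ) := by exact_mod_cast h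
        nlinarith
    have hmeq := measure_biUnion_finset (μ := volume) hdisj (fun n hn => hEm n (hsub n hn))
    have hle : ∑ n ∈ Tr, volume (E n) ≤ volume A := by
      rw [← hmeq]
      exact measure_mono (Set.iUnion₂_subset fun n hn => hEA n (hsub n hn))
    have hfin : ∀ n ∈ Tr, volume (E n) ≠ ⊤ := fun n hn =>
      ne_top_of_le_ne_top hAfin (measure_mono (hEA n (hsub n hn)))
    have h2 : ∑ n ∈ Tr, (volume (E n)).toReal ≤ (volume A).toReal := by
      rw [← ENNReal.toReal_sum hfin]
      exact ENNReal.toReal_mono hAfin hle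
    calc t * (Tr.card : ℝ) = ∑ _n ∈ Tr, t := by rw [Finset.sum_const, nsmul_eq_mul]; ring
      _ ≤ ∑ n ∈ Tr, (volume (E n)).toReal := Finset.sum_le_sum (fun n hn => hEt n (hsub n hn))
      _ ≤ (volume A).toReal := h2
  calc t * (T.card : ℝ)
      = ∑ r ∈ Finset.range 4, t * ((T.filter (fun n => (n % 4).toNat = r)).card : ℝ) := by
        rw [← Finset.mul_sum]; congr 1; rw [hcard]; push_cast; ring
    _ ≤ ∑ _r ∈ Finset.range 4, (volume A).toReal := Finset.sum_le_sum fun r _ => key r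
    _ = 4 * (volume A).toReal := by
        rw [Finset.sum_const, Finset.card_range, nsmul_eq_mul]; norm_num

private lemma cthick_subset {A : Set ℝ} {δ : ℝ} (hδ : 0 < δ) (hAsub : A ⊆ Set.Icc 0 1)
    (S : Finset ℝ) (hAeq : A = ⋃ x ∈ S, Set.Icc x (x + δ)) :
    cthickening δ A ⊆ ((· + δ) ⁻¹' A) ∪ A ∪ ((· + (-δ)) ⁻¹' A) := by
  rcases A.eq_empty_or_nonempty with hemp | hne
  · rw [hemp, cthickening_empty]; exact Set.empty_subset _
  have hclosed : IsClosed A := by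
    rw [hAeq]
    exact Set.Finite.isClosed_biUnion S.finite_toSet (fun _ _ => isClosed_Icc)
  have hcomp : IsCompact A := IsCompact.of_isClosed_subset isCompact_Icc hclosed hAsub
  intro y hy
  obtain ⟨a, haA, hda⟩ := hcomp.exists_infDist_eq_dist hne y
  have hdya : dist y a ≤ δ := by
    rw [← hda]
    exact ENNReal.toReal_le_of_le_ofReal hδ.le (mem_cthickening_iff.mp hy)
  rw [hAeq] at haA
  simp only [Set.mem_iUnion, exists_prop] at haA
  obtain ⟨x, hxS, hax⟩ := haA
  have haxA : Set.Icc x (x + δ) ⊆ A := by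
    intro w hw; rw [hAeq]; exact Set.mem_biUnion hxS hw
  rw [Real.dist_eq, abs_le] at hdya
  rcases lt_or_ge y x with h1 | h1
  · left; left
    show y + δ ∈ A
    exact haxA ⟨by cases hax; linarith, by linarith⟩
  · rcases le_or_gt y (x + δ) with h2 | h2
    · left; right
      exact haxA ⟨h1, h2⟩
    · right
      show y + (-δ) ∈ A
      exact haxA ⟨by linarith, by cases hax; linarith⟩

private lemma mul_rpow_le_mul_rpow {c1 c2 x y : ℝ} (h1 : 0 ≤ c1) (hc : c1 ≤ c2)
    (hxy : x ≤ y) : c1 * (2:ℝ) ^ x ≤ c2 * (2:ℝ) ^ y := by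
  have h := Real.rpow_le_rpow_of_exponent_le one_le_two hxy
  nlinarith [two_rpow_pos x, two_rpow_pos y]

set_option maxHeartbeats 2000000 in
/-- Katz–Tao refinement lemma. With `δ = 2^{-m}` and dyadic scales `δ' = 2^{-j}`,
`δ < δ' ≤ 1` (i.e. `j < m`), a union `A` of `δ`-intervals of measure `≤ δ^{1-σ-ε}`
decomposes as `A ⊆ A* ∪ ⋃ A_{δ'}`, each `A_{δ'}` is covered by
`≲ δ^{Kε-Cε}(δ')^{-σ}` intervals of length `δ'`, and `A*` is a `(δ,σ)`-set up to
`δ^{-Kε-Cε}` losses. -/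
theorem stmt_8 : ∃ C0 : ℝ, 0 < C0 ∧
    ∀ (m : ℕ) (σ K ε : ℝ), 0 < m → 0 < σ → σ < 1 → 1 ≤ K → 0 < ε →
    ∀ A : Set ℝ, MeasurableSet A → A ⊆ Set.Icc 0 1 →
    (∃ S : Finset ℝ, A = ⋃ x ∈ S, Set.Icc x (x + (2 : ℝ) ^ (-(m : ℝ)))) →
    (volume A).toReal ≤ ((2 : ℝ) ^ (-(m : ℝ))) ^ (1 - σ - ε) →
    (let δ : ℝ := (2 : ℝ) ^ (-(m : ℝ))
     let Ad : ℝ → Set ℝ := fun δ' =>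
       {x : ℝ | δ ^ (-(K * ε)) * δ * (δ' / δ) ^ σ ≤
          (volume (A ∩ closedBall x δ')).toReal}
     let Astar : Set ℝ :=
       cthickening δ (A \ ⋃ j ∈ Finset.range m, Ad ((2 : ℝ) ^ (-(j : ℝ))))
     (A ⊆ Astar ∪ ⋃ j ∈ Finset.range m, Ad ((2 : ℝ) ^ (-(j : ℝ)))) ∧
     (∀ j ∈ Finset.range m, ∃ S : Finset ℝ,
        Ad ((2 : ℝ) ^ (-(j : ℝ))) ⊆
          ⋃ x ∈ S, Set.Icc x (x + (2 : ℝ) ^ (-(j : ℝ))) ∧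
        (S.card : ℝ) ≤ C0 * δ ^ (K * ε - C0 * ε) * ((2 : ℝ) ^ (-(j : ℝ))) ^ (-σ)) ∧
     (∀ x r : ℝ, δ < r → r < 1 →
        (volume (Astar ∩ closedBall x r)).toReal ≤
          C0 * δ ^ (-(K * ε) - C0 * ε) * δ * (r / δ) ^ σ)) := by
  classical
  refine ⟨128, by norm_num, ?_⟩
  intro m σ K ε hm hσ0 hσ1 hK hε A hAmeas hAsub hAstruct hAvol
  obtain ⟨S0, hAeq⟩ := hAstruct
  intro δ Ad Astar
  have hδdef : δ = (2:ℝ) ^ (-(m:ℝ)) := rfl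
  have hAd : ∀ d z, z ∈ Ad d ↔
      δ ^ (-(K*ε)) * δ * (d/δ) ^ σ ≤ (volume (A ∩ closedBall z d)).toReal :=
    fun d z => Iff.rfl
  have hδ0 : 0 < δ := by rw [hδdef]; exact two_rpow_pos _
  have hδ1 : δ < 1 := by
    rw [hδdef, show (1:ℝ) = (2:ℝ)^(0:ℝ) by rw [Real.rpow_zero]]
    apply Real.rpow_lt_rpow_of_exponent_lt one_lt_two
    have : (0:ℝ) < m := by exact_mod_cast hm
    linarith
  have hAfin : volume A ≠ ⊤ :=
    ne_top_of_le_ne_top (by simp [Real.volume_Icc]) (measure_mono hAsub)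
  have hmε : 0 ≤ (m:ℝ) * ε := mul_nonneg (Nat.cast_nonneg m) hε.le
  refine ⟨?_, ?_, ?_⟩
  · -- Part 1
    intro a ha
    by_cases h : a ∈ ⋃ j ∈ Finset.range m, Ad ((2:ℝ)^(-(j:ℝ)))
    · exact Or.inr h
    · exact Or.inl (self_subset_cthickening _ ⟨ha, h⟩)
  · -- Part 2
    intro j hj
    rw [Finset.mem_range] at hj
    set δ' : ℝ := (2:ℝ)^(-(j:ℝ)) with hδ'
    have hδ'0 : 0 < δ' := two_rpow_pos _
    set t : ℝ := δ ^ (-(K*ε)) * δ * (δ'/δ) ^ σ with htdef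
    have ht0 : 0 < t := by
      rw [htdef]
      have h1 : 0 < δ ^ (-(K*ε)) := Real.rpow_pos_of_pos hδ0 _
      have h2 : 0 < (δ'/δ) ^ σ := Real.rpow_pos_of_pos (by positivity) _
      positivity
    set T : Finset ℤ := (Finset.Icc (-1 : ℤ) (2^j+1)).filter
      (fun n => (Ad δ' ∩ Set.Icc ((n:ℝ)*δ') ((n:ℝ)*δ'+δ')).Nonempty) with hT
    refine ⟨T.image (fun n : ℤ => (n:ℝ)*δ'), ?_, ?_⟩
    · -- coverage
      intro y hy
      have hyval : t ≤ (volume (A ∩ closedBall y δ')).toReal := (hAd δ' y).mp hy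
      have hne : (A ∩ closedBall y δ').Nonempty := by
        rw [Set.nonempty_iff_ne_empty]
        intro h
        rw [h] at hyval
        simp only [measure_empty, ENNReal.toReal_zero] at hyval
        linarith
      obtain ⟨a, haA, hay⟩ := hne
      obtain ⟨ha0, ha1⟩ := hAsub haA
      rw [mem_closedBall, Real.dist_eq, abs_le] at hay
      set n : ℤ := ⌊y / δ'⌋ with hn
      have h1 : (n:ℝ) ≤ y/δ' := Int.floor_le _
      have h2 : y/δ' < n+1 := Int.lt_floor_add_one _
      have e : (y/δ')*δ' = y := div_mul_cancel₀ y hδ'0.ne'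
      have l1 := mul_le_mul_of_nonneg_right h1 hδ'0.le
      have l2 := mul_le_mul_of_nonneg_right h2.le hδ'0.le
      rw [e] at l1 l2
      have hyIcc : y ∈ Set.Icc ((n:ℝ)*δ') ((n:ℝ)*δ'+δ') := ⟨l1, by nlinarith⟩
      have hnlow : (-1 : ℤ) ≤ n := by
        rw [hn]
        apply Int.le_floor.mpr
        push_cast
        rw [le_div_iff₀ hδ'0]
        nlinarith [hay.1]
      have hδ'inv : δ' * (2:ℝ)^(j:ℕ) = 1 := by
        rw [hδ', ← Real.rpow_natCast 2 j, ← Real.rpow_add two_pos]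
        simp
      have hnhigh : n ≤ 2^j + 1 := by
        have hyle : y / δ' ≤ ((2^j+1:ℤ):ℝ) := by
          push_cast
          rw [div_le_iff₀ hδ'0]
          nlinarith [hay.2]
        calc n ≤ ⌊((2^j+1:ℤ):ℝ)⌋ := Int.floor_le_floor hyle
          _ = 2^j+1 := Int.floor_intCast _
      have hnT : n ∈ T := by
        rw [hT, Finset.mem_filter]
        exact ⟨Finset.mem_Icc.mpr ⟨hnlow, hnhigh⟩, ⟨y, hy, hyIcc⟩⟩
      exact Set.mem_biUnion (Finset.mem_image.mpr ⟨n, hnT, rfl⟩) hyIcc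
    · -- cardinality
      have hrep : ∀ n ∈ T, (Ad δ' ∩ Set.Icc ((n:ℝ)*δ') ((n:ℝ)*δ'+δ')).Nonempty := by
        intro n hn
        rw [hT, Finset.mem_filter] at hn
        exact hn.2
      choose! xn hxn using hrep
      have hcount : t * (T.card : ℝ) ≤ 4 * (volume A).toReal := by
        apply count_lemma hAfin hδ'0 T (fun n => A ∩ closedBall (xn n) δ')
        · exact fun n _ => hAmeas.inter measurableSet_closedBall
        · exact fun n _ => Set.inter_subset_left
        · exact fun n hn => (hAd δ' (xn n)).mp (hxn n hn).1
        · intro n hn w hw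
          obtain ⟨hw1, hw2⟩ := hw
          rw [mem_closedBall, Real.dist_eq, abs_le] at hw2
          obtain ⟨hx1, hx2⟩ := (hxn n hn).2
          constructor
          · nlinarith [hw2.1]
          · nlinarith [hw2.2]
      have hTcard : (T.card : ℝ) ≤ 4 * ((2:ℝ)^(-(m:ℝ)))^(1-σ-ε) / t := by
        rw [le_div_iff₀ ht0]
        calc (T.card : ℝ) * t = t * T.card := by ring
          _ ≤ 4 * (volume A).toReal := hcount
          _ ≤ 4 * ((2:ℝ)^(-(m:ℝ)))^(1-σ-ε) := by linarith [hAvol]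
      have himg : ((T.image (fun n : ℤ => (n:ℝ)*δ')).card : ℝ) ≤ (T.card : ℝ) := by
        exact_mod_cast Finset.card_image_le
      refine le_trans himg (le_trans hTcard ?_)
      rw [div_le_iff₀ ht0, htdef, hδ', hδdef]
      have hdiv : (2:ℝ)^(-(j:ℝ)) / (2:ℝ)^(-(m:ℝ)) = (2:ℝ)^((-(j:ℝ)) + (m:ℝ)) := by
        rw [show (-(j:ℝ)) + (m:ℝ) = (-(j:ℝ)) - (-(m:ℝ)) by ring, Real.rpow_sub two_pos]
      rw [hdiv]
      rw [← Real.rpow_mul two_pos.le, ← Real.rpow_mul two_pos.le, ← Real.rpow_mul two_pos.le,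
        ← Real.rpow_mul two_pos.le, ← Real.rpow_mul two_pos.le]
      have hRHSeq : (128:ℝ) * (2:ℝ)^(-(m:ℝ)*(K*ε-128*ε)) * (2:ℝ)^(-(j:ℝ)*(-σ)) *
          ((2:ℝ)^(-(m:ℝ)*(-(K*ε))) * (2:ℝ)^(-(m:ℝ)) * (2:ℝ)^((-(j:ℝ)+(m:ℝ))*σ)) =
          128 * (2:ℝ)^(-(m:ℝ)*(K*ε-128*ε) + -(j:ℝ)*(-σ) + -(m:ℝ)*(-(K*ε)) + -(m:ℝ) +
            (-(j:ℝ)+(m:ℝ))*σ) := by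
        rw [Real.rpow_add two_pos, Real.rpow_add two_pos, Real.rpow_add two_pos,
          Real.rpow_add two_pos]
        ring
      rw [hRHSeq]
      apply mul_rpow_le_mul_rpow (by norm_num) (by norm_num)
      nlinarith [hmε]
  · -- Part 3
    intro x r hr1 hr2
    have hr0 : 0 < r := lt_trans hδ0 hr1
    have hrδpos : 0 < (r/δ)^σ := Real.rpow_pos_of_pos (by positivity) _
    have hRHS0 : 0 ≤ 128 * δ ^ (-(K*ε) - 128*ε) * δ * (r/δ) ^ σ := by
      have := Real.rpow_pos_of_pos hδ0 (-(K*ε) - 128*ε)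
      positivity
    by_cases hne : (Astar ∩ closedBall x r).Nonempty
    swap
    · rw [Set.not_nonempty_iff_eq_empty] at hne
      rw [hne]
      simpa using hRHS0
    obtain ⟨y, hy1, hy2⟩ := hne
    have hy1' : y ∈ cthickening δ (A \ ⋃ j ∈ Finset.range m, Ad ((2:ℝ)^(-(j:ℝ)))) := hy1
    have hyth : y ∈ thickening (2*δ) (A \ ⋃ j ∈ Finset.range m, Ad ((2:ℝ)^(-(j:ℝ)))) :=
      cthickening_subset_thickening' (by linarith) (by linarith) _ hy1'
    obtain ⟨z, hzA', hyz⟩ := mem_thickening_iff.mp hyth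
    have hzA : z ∈ A := hzA'.1
    rw [mem_closedBall] at hy2
    have hzx : |z - x| ≤ r + 2*δ := by
      rw [← Real.dist_eq]
      calc dist z x ≤ dist z y + dist y x := dist_triangle _ _ _
        _ ≤ 2*δ + r := by
            rw [dist_comm z y]
            exact add_le_add hyz.le hy2
        _ = r + 2*δ := by ring
    set B5 : Set ℝ := A ∩ closedBall z (5*r) with hB5
    have hB5fin : volume B5 ≠ ⊤ :=
      ne_top_of_le_ne_top measure_closedBall_lt_top.ne (measure_mono Set.inter_subset_right)
    have hsub : Astar ∩ closedBall x r ⊆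
        ((· + δ) ⁻¹' B5) ∪ B5 ∪ ((· + (-δ)) ⁻¹' B5) := by
      intro w hw
      obtain ⟨hw1, hw2⟩ := hw
      have hw1' : w ∈ cthickening δ (A \ ⋃ j ∈ Finset.range m, Ad ((2:ℝ)^(-(j:ℝ)))) := hw1
      have hw3 : w ∈ cthickening δ A := cthickening_subset_of_subset δ Set.diff_subset hw1'
      have hw4 := cthick_subset hδ0 hAsub S0 (by rw [← hδdef] at hAeq; exact hAeq) hw3
      rw [mem_closedBall, Real.dist_eq, abs_le] at hw2
      have hdist : ∀ c : ℝ, |c| ≤ δ → w + c ∈ A → w + c ∈ B5 := by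
        intro c hc hwc
        refine ⟨hwc, ?_⟩
        rw [mem_closedBall, Real.dist_eq, abs_le]
        rw [abs_le] at hc hzx
        constructor <;> nlinarith [hw2.1, hw2.2, hc.1, hc.2, hzx.1, hzx.2, hδ0, hr1]
      rcases hw4 with (h | h) | h
      · left; left
        exact hdist δ (by rw [abs_of_pos hδ0]) h
      · left; right
        have := hdist 0 (by simp [hδ0.le]) (by simpa using h)
        simpa using this
      · right
        exact hdist (-δ) (by rw [abs_neg, abs_of_pos hδ0]) h
    have hpre1 : volume ((· + δ) ⁻¹' B5) = volume B5 := measure_preimage_add_right volume δ B5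
    have hpre2 : volume ((· + (-δ)) ⁻¹' B5) = volume B5 :=
      measure_preimage_add_right volume (-δ) B5
    have hvol3 : (volume (Astar ∩ closedBall x r)).toReal ≤ 3 * (volume B5).toReal := by
      have h1 : volume (Astar ∩ closedBall x r) ≤ volume B5 + volume B5 + volume B5 := by
        calc volume (Astar ∩ closedBall x r)
            ≤ volume (((· + δ) ⁻¹' B5) ∪ B5 ∪ ((· + (-δ)) ⁻¹' B5)) := measure_mono hsub
          _ ≤ volume (((· + δ) ⁻¹' B5) ∪ B5) + volume ((· + (-δ)) ⁻¹' B5) :=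
              measure_union_le _ _
          _ ≤ (volume ((· + δ) ⁻¹' B5) + volume B5) + volume ((· + (-δ)) ⁻¹' B5) := by
              gcongr
              exact measure_union_le _ _
          _ = volume B5 + volume B5 + volume B5 := by rw [hpre1, hpre2]
      have h2 : (volume B5 + volume B5 + volume B5).toReal = 3 * (volume B5).toReal := by
        rw [ENNReal.toReal_add (ENNReal.add_ne_top.mpr ⟨hB5fin, hB5fin⟩) hB5fin,
          ENNReal.toReal_add hB5fin hB5fin]
        ring
      calc (volume (Astar ∩ closedBall x r)).toReal
          ≤ (volume B5 + volume B5 + volume B5).toReal := by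
            apply ENNReal.toReal_mono _ h1
            exact ENNReal.add_ne_top.mpr ⟨ENNReal.add_ne_top.mpr ⟨hB5fin, hB5fin⟩, hB5fin⟩
        _ = 3 * (volume B5).toReal := h2
    have hδexp : δ ^ (-(K*ε)) ≤ δ ^ (-(K*ε) - 128*ε) :=
      Real.rpow_le_rpow_of_exponent_ge hδ0 hδ1.le (by nlinarith)
    by_cases h5 : 5*r ≤ 1
    · -- main case
      obtain ⟨k, hk1, hk2⟩ := dyadic_choice (by linarith) h5
      have hkm : k < m := by
        have h4eq : (2:ℝ)^(2 - (m:ℝ)) = 4 * (2:ℝ)^(-(m:ℝ)) := by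
          rw [show (2:ℝ) - (m:ℝ) = 1 + 1 + (-(m:ℝ)) by ring, Real.rpow_add two_pos,
            Real.rpow_add two_pos, Real.rpow_one]
          ring
        have hlt : (2:ℝ)^(2 - (m:ℝ)) < (2:ℝ)^(-(k:ℝ)) := by
          rw [h4eq, ← hδdef]
          calc 4 * δ < 5 * r := by nlinarith [hδ0]
            _ ≤ (2:ℝ)^(-(k:ℝ)) := hk1
        have hexp := (Real.rpow_lt_rpow_left_iff one_lt_two).mp hlt
        have hmk : (k:ℝ) < (m:ℝ) := by linarith
        exact_mod_cast hmk
      have hzAd : z ∉ Ad ((2:ℝ)^(-(k:ℝ))) := fun hcon =>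
        hzA'.2 (Set.mem_biUnion (Finset.mem_range.mpr hkm) hcon)
      have hlt2 : (volume (A ∩ closedBall z ((2:ℝ)^(-(k:ℝ))))).toReal <
          δ ^ (-(K*ε)) * δ * ((2:ℝ)^(-(k:ℝ))/δ) ^ σ := by
        by_contra hcon
        exact hzAd ((hAd _ _).mpr (not_lt.mp hcon))
      have hmono : (volume B5).toReal ≤
          (volume (A ∩ closedBall z ((2:ℝ)^(-(k:ℝ))))).toReal := by
        apply ENNReal.toReal_mono
        · exact ne_top_of_le_ne_top measure_closedBall_lt_top.ne
            (measure_mono Set.inter_subset_right)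
        · exact measure_mono (Set.inter_subset_inter_right _
            (closedBall_subset_closedBall hk1))
      have hstep1 : ((2:ℝ)^(-(k:ℝ))/δ)^σ ≤ 10^σ * (r/δ)^σ := by
        rw [← Real.mul_rpow (by norm_num) (by positivity)]
        apply Real.rpow_le_rpow (by positivity) _ hσ0.le
        have h10r : (2:ℝ)^(-(k:ℝ)) ≤ 10*r := by linarith [hk2]
        calc (2:ℝ)^(-(k:ℝ))/δ ≤ (10*r)/δ := by gcongr
          _ = 10*(r/δ) := by ring
      have h10 : (10:ℝ)^σ ≤ 10 := by
        calc (10:ℝ)^σ ≤ (10:ℝ)^(1:ℝ) :=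
              Real.rpow_le_rpow_of_exponent_le (by norm_num) hσ1.le
          _ = 10 := Real.rpow_one _
      have hfinal : 3 * (δ ^ (-(K*ε)) * δ * ((2:ℝ)^(-(k:ℝ))/δ) ^ σ) ≤
          128 * δ^(-(K*ε)-128*ε) * δ * (r/δ)^σ := by
        have p1 : 0 < δ^(-(K*ε)) := Real.rpow_pos_of_pos hδ0 _
        calc 3 * (δ ^ (-(K*ε)) * δ * ((2:ℝ)^(-(k:ℝ))/δ) ^ σ)
            ≤ 3 * (δ ^ (-(K*ε)) * δ * (10^σ * (r/δ)^σ)) := by gcongr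
          _ ≤ 3 * (δ ^ (-(K*ε)) * δ * (10 * (r/δ)^σ)) := by gcongr
          _ = 30 * (δ ^ (-(K*ε)) * δ * (r/δ)^σ) := by ring
          _ ≤ 30 * (δ ^ (-(K*ε)-128*ε) * δ * (r/δ)^σ) := by gcongr
          _ ≤ 128 * δ^(-(K*ε)-128*ε) * δ * (r/δ)^σ := by
              have p2 : 0 < δ ^ (-(K*ε)-128*ε) := Real.rpow_pos_of_pos hδ0 _
              nlinarith [mul_pos (mul_pos p2 hδ0) hrδpos]
      linarith [hvol3, hmono, hlt2, hfinal, mul_le_mul_of_nonneg_left hmono (by norm_num : (0:ℝ) ≤ 3),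
        mul_lt_mul_of_pos_left hlt2 (by norm_num : (0:ℝ) < 3)]
    · -- trivial case: 1/5 ≤ r
      push_neg at h5
      have hr5 : (1:ℝ)/5 ≤ r := by linarith
      have hvA : (volume B5).toReal ≤ (volume A).toReal :=
        ENNReal.toReal_mono hAfin (measure_mono Set.inter_subset_left)
      have e1 : δ^(1-σ-ε) = δ^(-ε) * δ * (δ^σ)⁻¹ := by
        rw [show 1-σ-ε = -ε + 1 + -σ by ring, Real.rpow_add hδ0, Real.rpow_add hδ0,
          Real.rpow_one, Real.rpow_neg hδ0.le, Real.rpow_neg hδ0.le]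
      have e2 : (r/δ)^σ = r^σ * (δ^σ)⁻¹ := by
        rw [Real.div_rpow hr0.le hδ0.le, div_eq_mul_inv]
      have hrσ : 1/5 ≤ r^σ := by
        calc (1/5:ℝ) = (1/5:ℝ)^(1:ℝ) := (Real.rpow_one _).symm
          _ ≤ (1/5:ℝ)^σ :=
              Real.rpow_le_rpow_of_exponent_ge (by norm_num) (by norm_num) hσ1.le
          _ ≤ r^σ := Real.rpow_le_rpow (by norm_num) hr5 hσ0.le
      have hδe : δ^(-ε) ≤ δ^(-(K*ε)-128*ε) :=
        Real.rpow_le_rpow_of_exponent_ge hδ0 hδ1.le (by nlinarith)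
      have hnum : 3 * δ^(1-σ-ε) ≤ 128 * δ^(-(K*ε)-128*ε) * δ * (r/δ)^σ := by
        rw [e1, e2]
        have p3 : 0 < (δ^σ)⁻¹ := by
          have := Real.rpow_pos_of_pos hδ0 σ
          positivity
        have key : (3:ℝ) ≤ 128 * r^σ := by nlinarith [hrσ]
        calc 3*(δ^(-ε)*δ*(δ^σ)⁻¹) ≤ 3*(δ^(-(K*ε)-128*ε)*δ*(δ^σ)⁻¹) := by gcongr
          _ ≤ (128*r^σ)*(δ^(-(K*ε)-128*ε)*δ*(δ^σ)⁻¹) := by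
              have hpos : 0 ≤ δ^(-(K*ε)-128*ε)*δ*(δ^σ)⁻¹ := by
                have := Real.rpow_pos_of_pos hδ0 (-(K*ε)-128*ε)
                positivity
              nlinarith [mul_nonneg (by linarith : (0:ℝ) ≤ 128*r^σ - 3) hpos]
          _ = 128*δ^(-(K*ε)-128*ε)*δ*(r^σ*(δ^σ)⁻¹) := by ring
      calc (volume (Astar ∩ closedBall x r)).toReal ≤ 3 * (volume B5).toReal := hvol3
        _ ≤ 3 * (volume A).toReal := by linarith
        _ ≤ 3 * δ^(1-σ-ε) := by rw [hδdef]; linarith [hAvol]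
        _ ≤ 128 * δ^(-(K*ε)-128*ε) * δ * (r/δ)^σ := hnum
end

section
/- Let p₁ = (0,0) and p₂ ∈ ℝ² with |p₂| ≥ δ^{ρ/n} and dist(l_{p₁,p₂}, y) > δ^{ρ/n} for a point y ∈ ℝ². Then the lines l_{p₁, y} and l_{p₂, y} make an angle at least c·δ^{2ρ/n} for some constant c > 0 depending only on the diameter of the configuration (assumed bounded by an absolute constant). -/
open Metric

/-- With `p₁ = 0`, if `|p₂| ≥ δ^{ρ/n}` and `dist(l_{p₁,p₂}, y) > δ^{ρ/n}`, all points
in a fixed bounded region, then the lines `l_{p₁,y}` and `l_{p₂,y}` make an angle at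
least `c·δ^{2ρ/n}`. -/
theorem stmt_17 : ∃ c : ℝ, 0 < c ∧
    ∀ (δ ρ n : ℝ), 0 < δ → δ < 1 → 0 < ρ → 0 < n →
      ∀ p₂ y : EuclideanSpace ℝ (Fin 2),
        p₂ ∈ closedBall 0 10 → y ∈ closedBall 0 10 →
        δ ^ (ρ / n) ≤ ‖p₂‖ →
        δ ^ (ρ / n) < infDist y {x : EuclideanSpace ℝ (Fin 2) | ∃ t : ℝ, x = t • p₂} →
        c * δ ^ (2 * ρ / n) ≤
          min (InnerProductGeometry.angle (y - 0) (y - p₂))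
            (Real.pi - InnerProductGeometry.angle (y - 0) (y - p₂)) := by
  refine ⟨1/200, by norm_num, ?_⟩
  intro δ ρ n hδ hδ1 hρ hn p₂ y hp₂b hyb hp₂ hd
  set ε : ℝ := δ ^ (ρ / n) with hεdef
  have hε : 0 < ε := Real.rpow_pos_of_pos hδ _
  set S : Set (EuclideanSpace ℝ (Fin 2)) := {x : EuclideanSpace ℝ (Fin 2) | ∃ t : ℝ, x = t • p₂}
  set d : ℝ := infDist y S with hddef
  have hdpos : 0 < d := lt_trans hε hd
  have hSne : S.Nonempty := ⟨0, 0, by simp⟩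
  -- y ≠ 0 and y ≠ p₂
  have h0S : (0 : EuclideanSpace ℝ (Fin 2)) ∈ S := ⟨0, by simp⟩
  have hp₂S : p₂ ∈ S := ⟨1, by simp⟩
  have hy0 : d ≤ ‖y‖ := by
    simpa [dist_eq_norm] using infDist_le_dist_of_mem h0S
  have hyp₂ : d ≤ ‖y - p₂‖ := by
    simpa [dist_eq_norm] using infDist_le_dist_of_mem hp₂S
  have hp₂0 : (0:ℝ) < ‖p₂‖ := lt_of_lt_of_le hε hp₂
  -- distance to the projection
  set t : ℝ := (inner ℝ p₂ y : ℝ) / ‖p₂‖ ^ 2 with ht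
  have hmem : t • p₂ ∈ S := ⟨t, rfl⟩
  have hdle : d ≤ ‖y - t • p₂‖ := by
    simpa [dist_eq_norm] using infDist_le_dist_of_mem hmem
  have hproj : ‖y - t • p₂‖ ^ 2 = ‖y‖ ^ 2 - (inner ℝ p₂ y : ℝ) ^ 2 / ‖p₂‖ ^ 2 := by
    have h1 : ‖y - t • p₂‖ ^ 2 = ‖y‖ ^ 2 - 2 * (inner ℝ y (t • p₂) : ℝ) + ‖t • p₂‖ ^ 2 :=
      norm_sub_sq_real y (t • p₂)
    have h2 : (inner ℝ y (t • p₂) : ℝ) = t * (inner ℝ p₂ y : ℝ) := by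
      rw [real_inner_smul_right, real_inner_comm]
    have h3 : ‖t • p₂‖ ^ 2 = t ^ 2 * ‖p₂‖ ^ 2 := by
      rw [norm_smul]; simp [mul_pow, sq_abs]
    rw [h1, h2, h3, ht]
    field_simp
    ring
  -- Gram determinant bound
  have hgram : (‖p₂‖ * d) ^ 2 ≤ ‖y‖ ^ 2 * ‖p₂‖ ^ 2 - (inner ℝ p₂ y : ℝ) ^ 2 := by
    have h4 : d ^ 2 ≤ ‖y - t • p₂‖ ^ 2 := by
      apply pow_le_pow_left₀ hdpos.le hdle
    have h5 : d ^ 2 * ‖p₂‖ ^ 2 ≤ (‖y‖ ^ 2 - (inner ℝ p₂ y : ℝ) ^ 2 / ‖p₂‖ ^ 2) * ‖p₂‖ ^ 2 := by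
      apply mul_le_mul_of_nonneg_right _ (sq_nonneg _)
      rw [← hproj]; exact h4
    calc (‖p₂‖ * d) ^ 2 = d ^ 2 * ‖p₂‖ ^ 2 := by ring
      _ ≤ (‖y‖ ^ 2 - (inner ℝ p₂ y : ℝ) ^ 2 / ‖p₂‖ ^ 2) * ‖p₂‖ ^ 2 := h5
      _ = ‖y‖ ^ 2 * ‖p₂‖ ^ 2 - (inner ℝ p₂ y : ℝ) ^ 2 := by field_simp
  set θ : ℝ := InnerProductGeometry.angle (y - 0) (y - p₂) with hθ
  have hsin : Real.sin θ * (‖y‖ * ‖y - p₂‖) =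
      Real.sqrt ((inner ℝ y y : ℝ) * (inner ℝ (y - p₂) (y - p₂) : ℝ)
        - (inner ℝ y (y - p₂) : ℝ) * (inner ℝ y (y - p₂) : ℝ)) := by
    rw [hθ, sub_zero]
    exact InnerProductGeometry.sin_angle_mul_norm_mul_norm y (y - p₂)
  have hgram2 : (inner ℝ y y : ℝ) * (inner ℝ (y - p₂) (y - p₂) : ℝ)
        - (inner ℝ y (y - p₂) : ℝ) * (inner ℝ y (y - p₂) : ℝ)
      = ‖y‖ ^ 2 * ‖p₂‖ ^ 2 - (inner ℝ p₂ y : ℝ) ^ 2 := by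
    simp only [inner_sub_left, inner_sub_right, real_inner_self_eq_norm_sq]
    rw [real_inner_comm p₂ y]
    ring
  have hkey : ‖p₂‖ * d ≤ Real.sin θ * (‖y‖ * ‖y - p₂‖) := by
    rw [hsin, hgram2]
    have := Real.sqrt_le_sqrt hgram
    rwa [Real.sqrt_sq (by positivity)] at this
  -- norms bounded
  have hy10 : ‖y‖ ≤ 10 := by simpa using mem_closedBall_iff_norm.mp hyb
  have hp10 : ‖p₂‖ ≤ 10 := by simpa using mem_closedBall_iff_norm.mp hp₂b
  have hyp20 : ‖y - p₂‖ ≤ 20 := by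
    calc ‖y - p₂‖ ≤ ‖y‖ + ‖p₂‖ := norm_sub_le _ _
      _ ≤ 20 := by linarith
  have hsinnn : 0 ≤ Real.sin θ :=
    Real.sin_nonneg_of_nonneg_of_le_pi (InnerProductGeometry.angle_nonneg _ _)
      (InnerProductGeometry.angle_le_pi _ _)
  have hsinlb : ε ^ 2 ≤ 200 * Real.sin θ := by
    have h6 : ε * ε ≤ ‖p₂‖ * d := mul_le_mul hp₂ hd.le hε.le hp₂0.le
    have h7 : Real.sin θ * (‖y‖ * ‖y - p₂‖) ≤ Real.sin θ * 200 := by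
      apply mul_le_mul_of_nonneg_left _ hsinnn
      calc ‖y‖ * ‖y - p₂‖ ≤ 10 * 20 := by
            apply mul_le_mul hy10 hyp20 (norm_nonneg _) (by norm_num)
        _ = 200 := by norm_num
    nlinarith [hkey]
  -- ε^2 = δ^(2ρ/n)
  have hε2 : δ ^ (2 * ρ / n) = ε ^ 2 := by
    rw [hεdef, ← Real.rpow_natCast (δ ^ (ρ / n)) 2, ← Real.rpow_mul hδ.le]
    norm_num
    ring_nf
  -- angle bounds
  have hθnn : 0 ≤ θ := InnerProductGeometry.angle_nonneg _ _
  have hθpi : θ ≤ Real.pi := InnerProductGeometry.angle_le_pi _ _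
  have h8 : Real.sin θ ≤ θ := Real.sin_le hθnn
  have h9 : Real.sin θ ≤ Real.pi - θ := by
    have := Real.sin_le (x := Real.pi - θ) (by linarith)
    rwa [Real.sin_pi_sub] at this
  rw [hε2]
  rw [le_min_iff]
  constructor <;> linarith
end
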